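/- Let L : E → E' be a linear map with adjoint L*, and let Q ⊆ E' be a nonempty closed convex cone. Then the polar cone of the preimage L⁻¹(−Q) equals the closure of L*(Q*), i.e., (L⁻¹(−Q))° = cl(L*(Q*)), and consequently L⁻¹(−Q) = (cl(L*(Q*)))°. -/

import Mathlib

open RealInnerProductSpace Set Pointwise

variable {E E' : Type*}
  [NormedAddCommGroup E] [InnerProductSpace ℝ E] [FiniteDimensional ℝ E]
  [NormedAddCommGroup E'] [InnerProductSpace ℝ E'] [FiniteDimensional ℝ E']

/-- A nonempty closed convex cone containing `0`. -/
structure IsClosedConvexCone {F : Type*} [NormedAddCommGroup F] [InnerProductSpace ℝ F]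
    (K : Set F) : Prop where
  closed : IsClosed K
  convex : Convex ℝ K
  smul_mem : ∀ ⦃x⦄, x ∈ K → ∀ ⦃t : ℝ⦄, 0 ≤ t → t • x ∈ K
  zero_mem : (0 : F) ∈ K

/-- The dual cone `S* = {y : ⟨x,y⟩ ≥ 0 ∀ x ∈ S}`. -/
def dualCone {F : Type*} [NormedAddCommGroup F] [InnerProductSpace ℝ F] (S : Set F) : Set F :=
  {y | ∀ x ∈ S, 0 ≤ ⟪x, y⟫}

/-- The polar cone `S° = {y : ⟨x,y⟩ ≤ 0 ∀ x ∈ S}`. -/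
def polarCone {F : Type*} [NormedAddCommGroup F] [InnerProductSpace ℝ F] (S : Set F) : Set F :=
  {y | ∀ x ∈ S, ⟪x, y⟫ ≤ 0}

/-- Primal feasible set `X(b) = {x ∈ C : b - A x ∈ K}`. -/
def Xfeas (A : E →ₗ[ℝ] E') (K : Set E') (C : Set E) (b : E') : Set E :=
  {x | x ∈ C ∧ b - A x ∈ K}

/-- Dual feasible set `Y(c) = {y ∈ K* : A* y - c ∈ C*}`. -/
def Yfeas (A : E →ₗ[ℝ] E') (K : Set E') (C : Set E) (c : E) : Set E' :=
  {y | y ∈ dualCone K ∧ LinearMap.adjoint A y - c ∈ dualCone C}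

/-- Primal optimal value `P* = sup {⟨c,x⟩ : x ∈ X(b)}`. -/
noncomputable def Pval (A : E →ₗ[ℝ] E') (K : Set E') (C : Set E) (b : E') (c : E) : ℝ :=
  sSup ((fun x => ⟪c, x⟫) '' Xfeas A K C b)

/-- Dual optimal value `D* = inf {⟨b,y⟩ : y ∈ Y(c)}`. -/
noncomputable def Dval (A : E →ₗ[ℝ] E') (K : Set E') (C : Set E) (b : E') (c : E) : ℝ :=
  sInf ((fun y => ⟪b, y⟫) '' Yfeas A K C c)

/-- Recession cone of the primal feasible region: `{x ∈ C : A x ∈ -K}`. -/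
def recXSet (A : E →ₗ[ℝ] E') (K : Set E') (C : Set E) : Set E :=
  {x | x ∈ C ∧ A x ∈ -K}

/-- Recession cone of the dual feasible region: `{y ∈ K* : A* y ∈ C*}`. -/
def recYSet (A : E →ₗ[ℝ] E') (K : Set E') (C : Set E) : Set E' :=
  {y | y ∈ dualCone K ∧ LinearMap.adjoint A y ∈ dualCone C}

/-- `X(b)` is almost feasible. -/
def AlmostFeasX (A : E →ₗ[ℝ] E') (K : Set E') (C : Set E) (b : E') : Prop :=
  ∀ ε : ℝ, 0 < ε → ∃ bε : E', ‖bε‖ ≤ ε ∧ (Xfeas A K C (b + bε)).Nonempty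

/-- `Y(c)` is almost feasible. -/
def AlmostFeasY (A : E →ₗ[ℝ] E') (K : Set E') (C : Set E) (c : E) : Prop :=
  ∀ ε : ℝ, 0 < ε → ∃ cε : E, ‖cε‖ ≤ ε ∧ (Yfeas A K C (c + cε)).Nonempty

def Set.innerDualCone {H : Type*} [NormedAddCommGroup H] [InnerProductSpace ℝ H]
    (s : Set H) : ConvexCone ℝ H where
  carrier := { y | ∀ x ∈ s, 0 ≤ ⟪x, y⟫ }
  smul_mem' c hc y hy x hx := by rw [real_inner_smul_right]; exact mul_nonneg hc.le (hy x hx)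
  add_mem' u hu v hv x hx := by rw [inner_add_right]; exact add_nonneg (hu x hx) (hv x hx)

theorem mem_innerDualCone {H : Type*} [NormedAddCommGroup H] [InnerProductSpace ℝ H]
    (y : H) (s : Set H) : y ∈ s.innerDualCone ↔ ∀ x ∈ s, 0 ≤ ⟪x, y⟫ := Iff.rfl

theorem ConvexCone.innerDualCone_of_innerDualCone_eq_self {H : Type*} [NormedAddCommGroup H]
    [InnerProductSpace ℝ H] [CompleteSpace H] (K : ConvexCone ℝ H) (ne : (K : Set H).Nonempty)
    (hc : IsClosed (K : Set H)) :
    ((K : Set H).innerDualCone : Set H).innerDualCone = K := by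
  have h0 : (0 : H) ∈ K := by
    obtain ⟨x, hx⟩ := ne
    have ht : Filter.Tendsto (fun t : ℝ => t • x) (nhdsWithin 0 (Set.Ioi 0)) (nhds 0) := by
      have : Filter.Tendsto (fun t : ℝ => t • x) (nhds 0) (nhds ((0 : ℝ) • x)) :=
        (continuous_id.smul continuous_const).tendsto 0
      rw [zero_smul] at this
      exact this.mono_left nhdsWithin_le_nhds
    exact hc.mem_of_tendsto ht
      (eventually_nhdsWithin_of_forall fun t (htp : 0 < t) => K.smul_mem htp hx)
  let P : ProperCone ℝ H :=
    { carrier := K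
      add_mem' := fun ha hb => K.add_mem ha hb
      zero_mem' := h0
      smul_mem' := fun c x hx => by
        change (c : ℝ) • x ∈ (K : Set H)
        rcases (c.2).eq_or_lt with h | h
        · rw [← h, zero_smul]; exact h0
        · exact K.smul_mem h hx
      isClosed' := hc }
  ext y
  constructor
  · intro hy
    by_contra hyK
    have hyP : y ∉ P := hyK
    obtain ⟨z, hz, hyz⟩ := P.hyperplane_separation' hyP
    have := hy z (fun x hx => hz x hx)
    rw [real_inner_comm] at this
    linarith
  · intro hy x hx
    rw [real_inner_comm]
    exact hx y hy

/-- Package a closed convex cone (per `IsClosedConvexCone`) as a `ConvexCone`. -/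
def IsClosedConvexCone.toConvexCone {F : Type*} [NormedAddCommGroup F]
    [InnerProductSpace ℝ F] {K : Set F} (hK : IsClosedConvexCone K) : ConvexCone ℝ F where
  carrier := K
  smul_mem' := fun c hc {x} hx => hK.smul_mem hx hc.le
  add_mem' := fun x hx y hy => by
    have h := hK.convex hx hy (by norm_num : (0:ℝ) ≤ 1/2) (by norm_num : (0:ℝ) ≤ 1/2)
      (by norm_num)
    have h2 := hK.smul_mem h (by norm_num : (0:ℝ) ≤ 2)
    have : (2:ℝ) • ((1/2:ℝ) • x + (1/2:ℝ) • y) = x + y := by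
      rw [smul_add, smul_smul, smul_smul]; norm_num
    rwa [this] at h2

theorem dualCone_eq_innerDualCone {F : Type*} [NormedAddCommGroup F]
    [InnerProductSpace ℝ F] (S : Set F) :
    dualCone S = ((S.innerDualCone : ConvexCone ℝ F) : Set F) := rfl

theorem stmt5 (L : E →ₗ[ℝ] E') (Q : Set E') (hQ : IsClosedConvexCone Q) :
    polarCone (⇑L ⁻¹' (-Q)) = closure (⇑(LinearMap.adjoint L) '' dualCone Q) ∧
    ⇑L ⁻¹' (-Q) = polarCone (closure (⇑(LinearMap.adjoint L) '' dualCone Q)) := by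
  classical
  set QC : ConvexCone ℝ E' := hQ.toConvexCone with hQC
  have hQCcoe : (QC : Set E') = Q := rfl
  -- K is the closure of L*(Q*) as a convex cone
  set K : ConvexCone ℝ E :=
    ((Q.innerDualCone : ConvexCone ℝ E').map (LinearMap.adjoint L)).closure with hK
  have hKcoe : (K : Set E) = closure (⇑(LinearMap.adjoint L) '' dualCone Q) := by
    rw [hK, ConvexCone.coe_closure, ConvexCone.coe_map]
    rfl
  have hKclosed : IsClosed (K : Set E) := by rw [hKcoe]; exact isClosed_closure
  have hKne : (K : Set E).Nonempty := by
    refine ⟨LinearMap.adjoint L 0, ?_⟩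
    rw [hKcoe]
    exact subset_closure ⟨0, fun x _ => by rw [inner_zero_right], rfl⟩
  -- double dual of Q
  have hQdd : ((Q.innerDualCone : Set E').innerDualCone : Set E') = Q := by
    have := QC.innerDualCone_of_innerDualCone_eq_self ⟨0, hQ.zero_mem⟩
      (by rw [hQCcoe]; exact hQ.closed)
    rw [hQCcoe] at this
    exact congrArg SetLike.coe this
  -- the key claim: dual of K is L⁻¹ Q
  have claim : ∀ x : E, (∀ z ∈ (K : Set E), 0 ≤ ⟪z, x⟫) ↔ L x ∈ Q := by
    intro x
    constructor
    · intro h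
      rw [← hQdd]
      intro y hy
      have hz : LinearMap.adjoint L y ∈ (K : Set E) := by
        rw [hKcoe]; exact subset_closure ⟨y, hy, rfl⟩
      have := h _ hz
      rwa [LinearMap.adjoint_inner_left] at this
    · intro h z hz
      rw [hKcoe] at hz
      have hsub : ⇑(LinearMap.adjoint L) '' dualCone Q ⊆ {z : E | 0 ≤ ⟪z, x⟫} := by
        rintro _ ⟨y, hy, rfl⟩
        rw [Set.mem_setOf_eq, LinearMap.adjoint_inner_left, real_inner_comm]
        exact hy _ h
      have hcl : IsClosed {z : E | 0 ≤ ⟪z, x⟫} :=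
        isClosed_le continuous_const (continuous_id.inner continuous_const)
      exact (closure_minimal hsub hcl) hz
  -- double dual of K
  have hKdd : (((K : Set E).innerDualCone : Set E).innerDualCone : Set E) = K :=
    congrArg SetLike.coe (K.innerDualCone_of_innerDualCone_eq_self hKne hKclosed)
  -- dual of K as a set equals L⁻¹ Q
  have hdualK : ((K : Set E).innerDualCone : Set E) = ⇑L ⁻¹' Q := by
    ext x
    simp only [SetLike.mem_coe, mem_innerDualCone, Set.mem_preimage]
    exact claim x
  constructor
  · rw [← hKcoe, ← hKdd, hdualK]
    ext z
    simp only [polarCone, Set.mem_setOf_eq, SetLike.mem_coe, mem_innerDualCone,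
      Set.mem_preimage, Set.mem_neg]
    constructor
    · intro h x hx
      have := h (-x) (by rw [map_neg, neg_neg]; exact hx)
      rw [inner_neg_left] at this
      linarith
    · intro h x hx
      have : L (-x) ∈ Q := by rw [map_neg]; exact hx
      have := h (-x) this
      rw [inner_neg_left] at this
      linarith
  · ext x
    rw [← hKcoe]
    simp only [Set.mem_preimage, Set.mem_neg, polarCone, Set.mem_setOf_eq]
    constructor
    · intro h z hz
      have hLx : L (-x) ∈ Q := by rw [map_neg]; exact h
      have := ((claim (-x)).mpr hLx) z hz
      rw [inner_neg_right] at this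
      linarith
    · intro h
      have : L (-x) ∈ Q := by
        refine (claim (-x)).mp fun z hz => ?_
        rw [inner_neg_right]
        linarith [h z hz]
      rwa [map_neg] at this
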